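/- In the formal power series ring ℚ[u,v][[z]], let R = ∑_{n≥1} z^{n+1} · ∑_{k=1}^{n} C(n,k)·C(n,k-1)·u^{n+1-k}·v^{k}. Then (1 + 2·R)² · (1 - 2·(u+v)·z + (u-v)²·z²) = (1 - (u+v)·z)². -/

import Mathlib

noncomputable section

open MvPolynomial

/-- `ℚ[u,v]`, polynomials in two variables over `ℚ`. -/
abbrev Ruv : Type := MvPolynomial (Fin 2) ℚ

def pu : Ruv := X 0
def pv : Ruv := X 1

section Aux

open Finset PowerSeries

set_option maxHeartbeats 2000000

def bb (n : ℕ) : Ruv :=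
  ∑ k ∈ range (n+1), MvPolynomial.C (((n.choose k : ℚ))^2) * pu^(n-k) * pv^k

def rr (n : ℕ) : Ruv :=
  ∑ j ∈ range n, MvPolynomial.C ((n.choose (j+1) : ℚ) * (n.choose j : ℚ)) * pu^(n-j) * pv^(j+1)

lemma bb_succ (n : ℕ) : bb (n+1) = (pu+pv) * bb n + 2 * rr n := by
  have key : ∀ k ∈ range n,
      MvPolynomial.C (((n+1).choose (k+1) : ℚ)^2) * pu^(n-k) * pv^(k+1)
        = pu * (MvPolynomial.C ((n.choose (k+1) : ℚ)^2) * pu^(n-(k+1)) * pv^(k+1))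
          + pv * (MvPolynomial.C ((n.choose k : ℚ)^2) * pu^(n-k) * pv^k)
          + 2 * (MvPolynomial.C ((n.choose (k+1) : ℚ) * (n.choose k : ℚ)) * pu^(n-k) * pv^(k+1)) := by
    intro k hk
    have hk' : k < n := by simpa using hk
    have h1 : n - k = (n - (k+1)) + 1 := by omega
    have h2 : ((n+1).choose (k+1) : ℚ) = (n.choose k : ℚ) + (n.choose (k+1) : ℚ) := by
      rw [Nat.choose_succ_succ]; push_cast; ring
    rw [h2, h1]
    simp only [map_add, map_mul, map_pow]
    ring
  have hL : bb (n+1)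
      = (∑ k ∈ range n, MvPolynomial.C (((n+1).choose (k+1) : ℚ)^2) * pu^(n-k) * pv^(k+1))
        + MvPolynomial.C (((n+1).choose (n+1) : ℚ)^2) * pu^(n+1-(n+1)) * pv^(n+1)
        + MvPolynomial.C (((n+1).choose 0 : ℚ)^2) * pu^(n+1-0) * pv^0 := by
    rw [bb, Finset.sum_range_succ', Finset.sum_range_succ]
    congr 2
    apply Finset.sum_congr rfl
    intro k hk
    have : n + 1 - (k+1) = n - k := by omega
    rw [this]
  have hR : (pu+pv) * bb n + 2 * rr n
      = (∑ k ∈ range n,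
          (pu * (MvPolynomial.C ((n.choose (k+1) : ℚ)^2) * pu^(n-(k+1)) * pv^(k+1))
          + pv * (MvPolynomial.C ((n.choose k : ℚ)^2) * pu^(n-k) * pv^k)
          + 2 * (MvPolynomial.C ((n.choose (k+1) : ℚ) * (n.choose k : ℚ)) * pu^(n-k) * pv^(k+1))))
        + pv * (MvPolynomial.C ((n.choose n : ℚ)^2) * pu^(n-n) * pv^n)
        + pu * (MvPolynomial.C ((n.choose 0 : ℚ)^2) * pu^(n-0) * pv^0) := by
    rw [bb, rr, add_mul, Finset.mul_sum, Finset.mul_sum, Finset.mul_sum,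
      Finset.sum_range_succ' (fun k => pu * (MvPolynomial.C ((n.choose k : ℚ)^2) * pu^(n-k) * pv^k)),
      Finset.sum_range_succ (fun k => pv * (MvPolynomial.C ((n.choose k : ℚ)^2) * pu^(n-k) * pv^k))]
    rw [Finset.sum_add_distrib, Finset.sum_add_distrib]
    ring
  rw [hL, hR, Finset.sum_congr rfl key]
  simp
  ring

lemma pad (f : ℕ → Ruv) (m n : ℕ) (h : m ≤ n)
    (hf : ∀ k, m ≤ k → f k = 0) :
    ∑ k ∈ range m, f k = ∑ k ∈ range n, f k := by
  apply Finset.sum_subset (Finset.range_subset_range.mpr h)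
  intro k _ hk
  exact hf k (by simpa using hk)

lemma legq (n k : ℕ) :
    ((n:ℚ)+2) * (((n+2).choose (k+2) : ℚ))^2
      + ((n:ℚ)+1) * (((n.choose (k+2):ℚ))^2 - 2*((n.choose (k+1):ℚ))^2 + ((n.choose k:ℚ))^2)
    = (2*(n:ℚ)+3) * ((((n+1).choose (k+2):ℚ))^2 + (((n+1).choose (k+1):ℚ))^2) := by
  rcases lt_or_ge k n with h | h
  · have hcast : ((n - k : ℕ) : ℚ) = (n:ℚ) - k := Nat.cast_sub h.le
    have hcast2 : ((n - (k+1) : ℕ) : ℚ) = (n:ℚ) - (k+1) := by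
      push_cast [Nat.cast_sub h]; ring
    have e1 : (n.choose (k+1) : ℚ) * (k+1) = (n.choose k : ℚ) * ((n:ℚ) - k) := by
      rw [← hcast]; exact_mod_cast Nat.choose_succ_right_eq n k
    have e2 : (n.choose (k+2) : ℚ) * (k+2) = (n.choose (k+1) : ℚ) * ((n:ℚ) - (k+1)) := by
      rw [← hcast2]; exact_mod_cast Nat.choose_succ_right_eq n (k+1)
    have p1 : ((n+1).choose (k+1) : ℚ) = (n.choose k : ℚ) + (n.choose (k+1) : ℚ) := by
      rw [Nat.choose_succ_succ]; push_cast; ring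
    have p2 : ((n+1).choose (k+2) : ℚ) = (n.choose (k+1) : ℚ) + (n.choose (k+2) : ℚ) := by
      rw [Nat.choose_succ_succ]; push_cast; ring
    have p3 : ((n+2).choose (k+2) : ℚ)
        = (n.choose k : ℚ) + 2*(n.choose (k+1) : ℚ) + (n.choose (k+2) : ℚ) := by
      rw [Nat.choose_succ_succ, Nat.choose_succ_succ, Nat.choose_succ_succ]; push_cast; ring
    have hNK : (n:ℚ) - k ≠ 0 := by
      have : (k:ℚ) < n := by exact_mod_cast h
      intro hc; nlinarith
    have ha : (n.choose k : ℚ) = (n.choose (k+1) : ℚ) * (k+1) / ((n:ℚ) - k) := by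
      field_simp; linarith [e1]
    have hc : (n.choose (k+2) : ℚ) = (n.choose (k+1) : ℚ) * ((n:ℚ) - (k+1)) / ((k:ℚ)+2) := by
      have hk2 : ((k:ℚ)+2) ≠ 0 := by positivity
      field_simp; push_cast at e2 ⊢; linarith [e2]
    rw [p1, p2, p3, ha, hc]
    have hk2 : ((k:ℚ)+2) ≠ 0 := by positivity
    field_simp
    ring
  · rcases eq_or_lt_of_le h with rfl | h2
    · simp [Nat.choose_self, Nat.choose_succ_self, Nat.choose_eq_zero_of_lt]
      ring
    · have z1 : n.choose k = 0 := Nat.choose_eq_zero_of_lt h2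
      have z2 : n.choose (k+1) = 0 := Nat.choose_eq_zero_of_lt (by omega)
      have z3 : n.choose (k+2) = 0 := Nat.choose_eq_zero_of_lt (by omega)
      have z4 : (n+1).choose (k+1) = 0 := Nat.choose_eq_zero_of_lt (by omega)
      have z5 : (n+1).choose (k+2) = 0 := Nat.choose_eq_zero_of_lt (by omega)
      have z6 : (n+2).choose (k+2) = 0 := Nat.choose_eq_zero_of_lt (by omega)
      simp [z1, z2, z3, z4, z5, z6]

lemma bb_rec (n : ℕ) :
    MvPolynomial.C ((n:ℚ)+2) * bb (n+2)
      + MvPolynomial.C ((n:ℚ)+1) * ((pu-pv)^2 * bb n)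
    = MvPolynomial.C (2*(n:ℚ)+3) * ((pu+pv) * bb (n+1)) := by
  have hplus : ∀ m:ℕ, m+1+1 = m+2 := fun m => by omega
  have h1 : bb (n+2) = (∑ k ∈ range (n+1),
        MvPolynomial.C (((n+2).choose (k+2) : ℚ)^2) * pu^(n-k) * pv^(k+2))
      + MvPolynomial.C (((n+2).choose 1 : ℚ)^2) * pu^(n+1) * pv^1
      + MvPolynomial.C (((n+2).choose 0 : ℚ)^2) * pu^(n+2) * pv^0 := by
    have e : ∀ k:ℕ, n+2-(k+2) = n-k := fun k => by omega
    rw [bb, Finset.sum_range_succ', Finset.sum_range_succ']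
    simp only [hplus, e]
    norm_num
  have h2 : pu*(pu*bb n) = (∑ k ∈ range (n+1),
        pu*(pu*(MvPolynomial.C ((n.choose (k+2) : ℚ)^2) * pu^(n-(k+2)) * pv^(k+2))))
      + pu*(pu*(MvPolynomial.C ((n.choose 1 : ℚ)^2) * pu^(n-1) * pv^1))
      + pu*(pu*(MvPolynomial.C ((n.choose 0 : ℚ)^2) * pu^(n-0) * pv^0)) := by
    rw [bb, Finset.mul_sum, Finset.mul_sum,
      pad (fun k => pu*(pu*(MvPolynomial.C ((n.choose k : ℚ)^2) * pu^(n-k) * pv^k)))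
        (n+1) (n+3) (by omega)
        (fun k hk => by simp [Nat.choose_eq_zero_of_lt (by omega : n < k)]),
      Finset.sum_range_succ', Finset.sum_range_succ']
  have h3 : pu*(pv*bb n) = (∑ k ∈ range (n+1),
        pu*(pv*(MvPolynomial.C ((n.choose (k+1) : ℚ)^2) * pu^(n-(k+1)) * pv^(k+1))))
      + pu*(pv*(MvPolynomial.C ((n.choose 0 : ℚ)^2) * pu^(n-0) * pv^0)) := by
    rw [bb, Finset.mul_sum, Finset.mul_sum,
      pad (fun k => pu*(pv*(MvPolynomial.C ((n.choose k : ℚ)^2) * pu^(n-k) * pv^k)))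
        (n+1) (n+2) (by omega)
        (fun k hk => by simp [Nat.choose_eq_zero_of_lt (by omega : n < k)]),
      Finset.sum_range_succ']
  have h4 : pv*(pv*bb n) = (∑ k ∈ range (n+1),
        pv*(pv*(MvPolynomial.C ((n.choose k : ℚ)^2) * pu^(n-k) * pv^k))) := by
    rw [bb, Finset.mul_sum, Finset.mul_sum]
  have h5 : pu*bb (n+1) = (∑ k ∈ range (n+1),
        pu*(MvPolynomial.C (((n+1).choose (k+2) : ℚ)^2) * pu^(n+1-(k+2)) * pv^(k+2)))
      + pu*(MvPolynomial.C (((n+1).choose 1 : ℚ)^2) * pu^(n+1-1) * pv^1)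
      + pu*(MvPolynomial.C (((n+1).choose 0 : ℚ)^2) * pu^(n+1-0) * pv^0) := by
    rw [bb, Finset.mul_sum,
      pad (fun k => pu*(MvPolynomial.C (((n+1).choose k : ℚ)^2) * pu^(n+1-k) * pv^k))
        (n+2) (n+3) (by omega)
        (fun k hk => by simp [Nat.choose_eq_zero_of_lt (by omega : n+1 < k)]),
      Finset.sum_range_succ', Finset.sum_range_succ']
  have h6 : pv*bb (n+1) = (∑ k ∈ range (n+1),
        pv*(MvPolynomial.C (((n+1).choose (k+1) : ℚ)^2) * pu^(n+1-(k+1)) * pv^(k+1)))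
      + pv*(MvPolynomial.C (((n+1).choose 0 : ℚ)^2) * pu^(n+1-0) * pv^0) := by
    rw [bb, Finset.mul_sum, Finset.sum_range_succ']
  have key : ∀ k ∈ range (n+1),
      MvPolynomial.C ((n:ℚ)+2) * (MvPolynomial.C (((n+2).choose (k+2) : ℚ)^2) * pu^(n-k) * pv^(k+2))
      + (MvPolynomial.C ((n:ℚ)+1) *
          (pu*(pu*(MvPolynomial.C ((n.choose (k+2) : ℚ)^2) * pu^(n-(k+2)) * pv^(k+2))))
           - 2*(MvPolynomial.C ((n:ℚ)+1) * (pu*(pv*(MvPolynomial.C ((n.choose (k+1) : ℚ)^2) * pu^(n-(k+1)) * pv^(k+1)))))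
           + MvPolynomial.C ((n:ℚ)+1) * (pv*(pv*(MvPolynomial.C ((n.choose k : ℚ)^2) * pu^(n-k) * pv^k))))
      = MvPolynomial.C (2*(n:ℚ)+3) *
          (pu*(MvPolynomial.C (((n+1).choose (k+2) : ℚ)^2) * pu^(n+1-(k+2)) * pv^(k+2))
           + pv*(MvPolynomial.C (((n+1).choose (k+1) : ℚ)^2) * pu^(n+1-(k+1)) * pv^(k+1))) := by
    intro k hk
    have hk' : k ≤ n := by simpa [Nat.lt_succ_iff] using hk
    rcases Nat.lt_or_ge (k+2) (n+1) with hcase | hcase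
    · -- k+2 ≤ n
      obtain ⟨m, rfl⟩ : ∃ m, n = k+2+m := ⟨n-(k+2), by omega⟩
      have e1 : k+2+m-k = m+2 := by omega
      have e2 : k+2+m-(k+1) = m+1 := by omega
      have e3 : k+2+m-(k+2) = m := by omega
      have e4 : k+2+m+1-(k+2) = m+1 := by omega
      have e5 : k+2+m+1-(k+1) = m+2 := by omega
      have lq' := congrArg (MvPolynomial.C : ℚ →+* Ruv) (legq (k+2+m) k)
      simp only [map_add, map_mul, map_pow, map_sub, map_natCast, map_ofNat, map_one] at lq'
      simp only [e1, e2, e3, e4, e5]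
      simp only [map_add, map_mul, map_pow, map_sub, map_natCast, map_ofNat, map_one]
      linear_combination lq' * (pu^(m+2) * pv^(k+2))
    · rcases Nat.lt_or_ge k n with hcase2 | hcase2
      · -- n = k+1
        obtain rfl : n = k+1 := by omega
        have e1 : k+1-k = 1 := by omega
        have e2 : k+1-(k+1) = 0 := by omega
        have e3 : k+1-(k+2) = 0 := by omega
        have e4 : k+1+1-(k+2) = 0 := by omega
        have e5 : k+1+1-(k+1) = 1 := by omega
        have z : (k+1).choose (k+2) = 0 := Nat.choose_eq_zero_of_lt (by omega)
        have lq := legq (k+1) k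
        rw [z] at lq
        have lq' := congrArg (MvPolynomial.C : ℚ →+* Ruv) lq
        simp only [map_add, map_mul, map_pow, map_sub, map_natCast, map_ofNat, map_one,
          Nat.cast_zero, map_zero] at lq'
        simp only [e1, e2, e3, e4, e5, z]
        simp only [map_add, map_mul, map_pow, map_sub, map_natCast, map_ofNat, map_one,
          Nat.cast_zero, map_zero]
        linear_combination lq' * (pu * pv^(k+2))
      · -- n = k
        obtain rfl : k = n := by omega
        have e1 : k-k = 0 := by omega
        have e2 : k-(k+1) = 0 := by omega
        have e3 : k-(k+2) = 0 := by omega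
        have e4 : k+1-(k+2) = 0 := by omega
        have e5 : k+1-(k+1) = 0 := by omega
        have z1 : k.choose (k+1) = 0 := Nat.choose_eq_zero_of_lt (by omega)
        have z2 : k.choose (k+2) = 0 := Nat.choose_eq_zero_of_lt (by omega)
        have z3 : (k+1).choose (k+2) = 0 := Nat.choose_eq_zero_of_lt (by omega)
        have lq := legq k k
        rw [z1, z2, z3] at lq
        have lq' := congrArg (MvPolynomial.C : ℚ →+* Ruv) lq
        simp only [map_add, map_mul, map_pow, map_sub, map_natCast, map_ofNat, map_one,
          Nat.cast_zero, map_zero] at lq'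
        simp only [e1, e2, e3, e4, e5, z1, z2, z3]
        simp only [map_add, map_mul, map_pow, map_sub, map_natCast, map_ofNat, map_one,
          Nat.cast_zero, map_zero]
        linear_combination lq' * (pv^(k+2))
  -- assembly
  have expand2 : MvPolynomial.C ((n:ℚ)+1) * ((pu-pv)^2 * bb n)
      = MvPolynomial.C ((n:ℚ)+1) * (pu*(pu*bb n)) - 2*(MvPolynomial.C ((n:ℚ)+1) * (pu*(pv*bb n)))
        + MvPolynomial.C ((n:ℚ)+1) * (pv*(pv*bb n)) := by ring
  have expandR : MvPolynomial.C (2*(n:ℚ)+3) * ((pu+pv) * bb (n+1))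
      = MvPolynomial.C (2*(n:ℚ)+3) * (pu*bb (n+1)) + MvPolynomial.C (2*(n:ℚ)+3) * (pv*bb (n+1)) := by
    ring
  have loose : MvPolynomial.C ((n:ℚ)+2) * (MvPolynomial.C (((n+2).choose 1 : ℚ)^2) * pu^(n+1) * pv^1)
      + MvPolynomial.C ((n:ℚ)+2) * (MvPolynomial.C (((n+2).choose 0 : ℚ)^2) * pu^(n+2) * pv^0)
      + (MvPolynomial.C ((n:ℚ)+1) * (pu*(pu*(MvPolynomial.C ((n.choose 1 : ℚ)^2) * pu^(n-1) * pv^1)))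
      + MvPolynomial.C ((n:ℚ)+1) * (pu*(pu*(MvPolynomial.C ((n.choose 0 : ℚ)^2) * pu^(n-0) * pv^0))))
      - 2*(MvPolynomial.C ((n:ℚ)+1) * (pu*(pv*(MvPolynomial.C ((n.choose 0 : ℚ)^2) * pu^(n-0) * pv^0))))
      = MvPolynomial.C (2*(n:ℚ)+3) * (pu*(MvPolynomial.C (((n+1).choose 1 : ℚ)^2) * pu^(n+1-1) * pv^1))
      + MvPolynomial.C (2*(n:ℚ)+3) * (pu*(MvPolynomial.C (((n+1).choose 0 : ℚ)^2) * pu^(n+1-0) * pv^0))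
      + MvPolynomial.C (2*(n:ℚ)+3) * (pv*(MvPolynomial.C (((n+1).choose 0 : ℚ)^2) * pu^(n+1-0) * pv^0)) := by
    rcases n with _ | m
    · norm_num
      push_cast
      simp only [map_add, map_mul, map_pow, map_natCast, map_ofNat, map_one]
      ring
    · have e1 : m+1-1 = m := by omega
      have e2 : m+1-0 = m+1 := by omega
      have e3 : m+1+1-1 = m+1 := by omega
      have e4 : m+1+1-0 = m+2 := by omega
      simp only [e1, e2, e3, e4, Nat.choose_zero_right, Nat.choose_one_right, Nat.cast_one,
        Nat.cast_add, Nat.cast_ofNat]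
      simp only [map_add, map_mul, map_pow, map_natCast, map_ofNat, map_one]
      push_cast
      ring
  rw [expand2, expandR, h1, h2, h3, h4, h5, h6]
  have sumeq := Finset.sum_congr rfl key
  clear h1 h2 h3 h4 h5 h6 key
  simp only [mul_add, mul_sub, Finset.mul_sum, Finset.sum_add_distrib, Finset.sum_sub_distrib]
    at sumeq ⊢
  linear_combination sumeq + loose

def BB : PowerSeries Ruv := PowerSeries.mk bb

def QQ : PowerSeries Ruv :=
  1 - 2 * PowerSeries.C (R := Ruv) (pu + pv) * PowerSeries.X
    + PowerSeries.C (R := Ruv) ((pu - pv) ^ 2) * PowerSeries.X ^ 2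

lemma bb_zero : bb 0 = 1 := by simp [bb]
lemma bb_one : bb 1 = pu + pv := by simp [bb, Finset.sum_range_succ]

lemma hdQ : d⁄dX Ruv QQ
    = PowerSeries.C (R := Ruv) (2*(pu-pv)^2) * PowerSeries.X - PowerSeries.C (R := Ruv) (2*(pu+pv)) := by
  have hQ : QQ = 1 - PowerSeries.C (R := Ruv) (2*(pu+pv)) * PowerSeries.X
      + PowerSeries.C (R := Ruv) ((pu-pv)^2) * (PowerSeries.X * PowerSeries.X) := by
    rw [QQ]; simp only [map_mul, map_ofNat, pow_two]
  rw [hQ, map_add, map_sub, Derivation.map_one_eq_zero, Derivation.leibniz, Derivation.leibniz,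
    Derivation.leibniz]
  simp only [derivative_X, derivative_C, smul_zero, PowerSeries.smul_eq_C_mul, mul_zero,
    mul_one, zero_add, add_zero, zero_sub, sub_zero, smul_eq_mul]
  simp only [map_mul, map_sub, map_add, map_pow, map_ofNat]
  ring

lemma ode :
    BB * PowerSeries.X ^ 1 * PowerSeries.C (R := Ruv) (2*(pu-pv)^2)
      + d⁄dX Ruv BB * PowerSeries.C (R := Ruv) 2
      + d⁄dX Ruv BB * PowerSeries.X ^ 2 * PowerSeries.C (R := Ruv) (2*(pu-pv)^2)
    = BB * PowerSeries.C (R := Ruv) (2*(pu+pv))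
      + d⁄dX Ruv BB * PowerSeries.X ^ 1 * PowerSeries.C (R := Ruv) (4*(pu+pv)) := by
  refine PowerSeries.ext fun n => ?_
  simp only [map_add, PowerSeries.coeff_mul_C, PowerSeries.coeff_mul_X_pow',
    PowerSeries.coeff_derivative, PowerSeries.coeff_mk, BB]
  rcases n with _ | n
  · norm_num [bb_zero, bb_one]
    ring
  · rcases n with _ | n
    · norm_num
      have h := bb_rec 0
      simp only [Nat.cast_zero, zero_add, map_add, map_one, map_ofNat, map_mul, map_zero,
        mul_zero, zero_mul, add_zero] at h
      push_cast
      linear_combination h + h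
    · have hif1 : (1 ≤ n + 1 + 1) := by omega
      have hif2 : (2 ≤ n + 1 + 1) := by omega
      rw [if_pos hif1, if_pos hif1, if_pos hif2]
      have e1 : n + 1 + 1 - 1 = n + 1 := by omega
      have e2 : n + 1 + 1 - 2 = n := by omega
      rw [e1, e2]
      have h := bb_rec (n+1)
      simp only [map_add, map_one, map_ofNat, map_mul, map_natCast] at h
      push_cast at h ⊢
      linear_combination h + h

lemma bbq : BB * BB * QQ = 1 := by
  have hD : d⁄dX Ruv (BB * BB * QQ) = 0 := by
    have expand : d⁄dX Ruv (BB * BB * QQ)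
        = BB * (BB * d⁄dX Ruv QQ + 2 * (QQ * d⁄dX Ruv BB)) := by
      simp only [Derivation.leibniz, smul_eq_mul]; ring
    rw [expand, hdQ]
    have key : BB * (PowerSeries.C (R := Ruv) (2*(pu-pv)^2) * PowerSeries.X
          - PowerSeries.C (R := Ruv) (2*(pu+pv))) + 2 * (QQ * d⁄dX Ruv BB) = 0 := by
      have o := ode
      rw [QQ]
      simp only [map_mul, map_ofNat, map_add, map_sub, map_pow] at o ⊢
      linear_combination o
    rw [key, mul_zero]
  refine PowerSeries.ext fun n => ?_
  rcases n with _ | n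
  · simp only [PowerSeries.coeff_zero_eq_constantCoeff_apply, map_mul, map_one]
    rw [QQ, BB]
    simp [PowerSeries.constantCoeff_mk, bb_zero]
  · have h := congrArg (PowerSeries.coeff (R := Ruv) n) hD
    rw [PowerSeries.coeff_derivative, map_zero] at h
    have hne : ((n:Ruv) + 1) ≠ 0 := by
      have : (((n+1:ℕ)):Ruv) ≠ 0 := Nat.cast_ne_zero.mpr (by omega)
      push_cast at this
      exact this
    have hcoeff : PowerSeries.coeff (R := Ruv) (n+1) (BB*BB*QQ) = 0 := by
      rcases mul_eq_zero.mp h with h' | h'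
      · exact h'
      · exact absurd h' hne
    rw [hcoeff]
    simp [PowerSeries.coeff_one]

lemma hPB :
    (1 + 2 * PowerSeries.mk (fun m => if 2 ≤ m then
          ∑ k ∈ Finset.Icc 1 (m - 1),
            MvPolynomial.C ((((m - 1).choose k : ℚ)) * (((m - 1).choose (k - 1) : ℚ)))
              * pu ^ (m - k) * pv ^ k
        else 0))
    = BB - BB * PowerSeries.X ^ 1 * PowerSeries.C (R := Ruv) (pu + pv) := by
  rw [show (2 : PowerSeries Ruv) = PowerSeries.C (R := Ruv) (2:Ruv) from (map_ofNat _ 2).symm]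
  set w : Ruv := pu + pv with hw
  refine PowerSeries.ext fun n => ?_
  simp only [map_add, map_sub, PowerSeries.coeff_C_mul, PowerSeries.coeff_mul_C,
    PowerSeries.coeff_mul_X_pow', PowerSeries.coeff_mk, PowerSeries.coeff_one, BB]
  rcases n with _ | n
  · norm_num [bb_zero]
  · rcases n with _ | n
    · norm_num [bb_zero, bb_one, hw]
    · have hif : 2 ≤ n + 1 + 1 := by omega
      rw [if_pos hif, if_neg (by omega : ¬ (n+1+1 = 0)), if_pos (by omega : 1 ≤ n+1+1)]
      have e0 : n + 1 + 1 - 1 = n + 1 := by omega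
      rw [e0]
      have hsum : ∑ k ∈ Finset.Icc 1 (n+1),
            MvPolynomial.C ((((n+1).choose k : ℚ)) * (((n+1).choose (k - 1) : ℚ)))
              * pu ^ (n+1+1 - k) * pv ^ k = rr (n+1) := by
        rw [← Finset.Ico_add_one_right_eq_Icc, Finset.sum_Ico_eq_sum_range]
        have e1 : n + 1 + 1 - 1 = n + 1 := by omega
        rw [e1, rr]
        refine Finset.sum_congr rfl fun i hi => ?_
        have e2 : 1 + i - 1 = i := by omega
        have e3 : n + 1 + 1 - (1 + i) = n + 1 - i := by omega
        have e4 : 1 + i = i + 1 := by omega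
        rw [e2, e3, e4]
      rw [hsum]
      have h := bb_succ (n+1)
      rw [hw]
      linear_combination -h

theorem a132812_generating_series :
    (1 + 2 * PowerSeries.mk (fun m => if 2 ≤ m then
          ∑ k ∈ Finset.Icc 1 (m - 1),
            MvPolynomial.C ((((m - 1).choose k : ℚ)) * (((m - 1).choose (k - 1) : ℚ)))
              * pu ^ (m - k) * pv ^ k
        else 0)) ^ 2
      * (1 - 2 * PowerSeries.C (R := Ruv) (pu + pv) * PowerSeries.X
          + PowerSeries.C (R := Ruv) ((pu - pv) ^ 2) * PowerSeries.X ^ 2)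
      = (1 - PowerSeries.C (R := Ruv) (pu + pv) * PowerSeries.X) ^ 2 := by
  rw [hPB, show (1 - 2 * PowerSeries.C (R := Ruv) (pu + pv) * PowerSeries.X
          + PowerSeries.C (R := Ruv) ((pu - pv) ^ 2) * PowerSeries.X ^ 2) = QQ from rfl]
  calc (BB - BB * PowerSeries.X ^ 1 * PowerSeries.C (R := Ruv) (pu + pv)) ^ 2 * QQ
      = (1 - PowerSeries.C (R := Ruv) (pu + pv) * PowerSeries.X) ^ 2 * (BB * BB * QQ) := by ring
    _ = (1 - PowerSeries.C (R := Ruv) (pu + pv) * PowerSeries.X) ^ 2 := by rw [bbq, mul_one]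

end Aux

end
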